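/- Let n ≥ 2, 0 ≤ κ < 1, 0 < δ ≤ n, and δ/n < p < δ. Then there exists a constant c depending only on n, δ, κ, and p such that for all x ∈ ℝⁿ and all f ∈ L¹_loc(ℝⁿ): ∫_{ℝⁿ} |f(y)| / |x−y|^{n−1} dy ≤ c ( M_κ f(x) )^{(δ−p)/(δ−κp)} ( ∫_{ℝⁿ} |f(y)|^p dH^δ_∞ )^{(1−κ)/(δ−κp)}. -/

import Mathlib

open MeasureTheory Metric Set Bornology
open scoped ENNReal NNReal

/-- The `δ`-dimensional Hausdorff content of a set `E ⊆ ℝⁿ`, defined as the infimum of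
`∑ᵢ rᵢ^δ` over all countable coverings of `E` by open balls `B(xᵢ, rᵢ)`. -/
noncomputable def hContent (n : ℕ) (δ : ℝ) (E : Set (EuclideanSpace ℝ (Fin n))) : ℝ≥0∞ :=
  ⨅ (x : ℕ → EuclideanSpace ℝ (Fin n)) (r : ℕ → ℝ≥0)
    (_ : E ⊆ ⋃ i, Metric.ball (x i) (r i)), ∑' i, (r i : ℝ≥0∞) ^ δ

/-- The `δ`-dimensional Hausdorff measure of `E ⊆ ℝⁿ`, obtained from coverings by open balls of
radii at most `ρ`, in the limit `ρ → 0⁺` (equivalently: the supremum over `ρ > 0`, since the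
infima increase as `ρ` decreases). -/
noncomputable def hMeasure (n : ℕ) (δ : ℝ) (E : Set (EuclideanSpace ℝ (Fin n))) : ℝ≥0∞ :=
  ⨆ (ρ : ℝ≥0) (_ : 0 < ρ),
    ⨅ (x : ℕ → EuclideanSpace ℝ (Fin n)) (r : ℕ → ℝ≥0)
      (_ : E ⊆ ⋃ i, Metric.ball (x i) (r i)) (_ : ∀ i, r i ≤ ρ), ∑' i, (r i : ℝ≥0∞) ^ δ

/-- The Choquet integral `∫_Ω f dH^δ_∞ = ∫₀^∞ H^δ_∞({x ∈ Ω : f x > t}) dt` of a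
(nonnegative) real-valued function with respect to the Hausdorff content. -/
noncomputable def choquet (n : ℕ) (δ : ℝ) (Ω : Set (EuclideanSpace ℝ (Fin n)))
    (f : EuclideanSpace ℝ (Fin n) → ℝ) : ℝ≥0∞ :=
  ∫⁻ t in Set.Ioi (0 : ℝ), hContent n δ {x ∈ Ω | t < f x}

/-- The Choquet integral of an `[0,∞]`-valued function with respect to the Hausdorff content. -/
noncomputable def echoquet (n : ℕ) (δ : ℝ) (Ω : Set (EuclideanSpace ℝ (Fin n)))
    (f : EuclideanSpace ℝ (Fin n) → ℝ≥0∞) : ℝ≥0∞ :=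
  ∫⁻ t in Set.Ioi (0 : ℝ), hContent n δ {x ∈ Ω | ENNReal.ofReal t < f x}

/-- The centered fractional Hardy–Littlewood maximal function
`M_κ f (x) = sup_{r>0} r^{κ-n} ∫_{B(x,r)} |f|`. -/
noncomputable def fracMaximal (n : ℕ) (κ : ℝ) (f : EuclideanSpace ℝ (Fin n) → ℝ)
    (x : EuclideanSpace ℝ (Fin n)) : ℝ≥0∞ :=
  ⨆ (r : ℝ) (_ : 0 < r),
    ENNReal.ofReal (r ^ (κ - n)) * ∫⁻ y in Metric.ball x r, ENNReal.ofReal |f y|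

/-- The Riesz potential of order `1`: `I₁ f (x) = ∫_{ℝⁿ} |f y| / |x-y|^{n-1} dy`. -/
noncomputable def rieszPot (n : ℕ) (f : EuclideanSpace ℝ (Fin n) → ℝ)
    (x : EuclideanSpace ℝ (Fin n)) : ℝ≥0∞ :=
  ∫⁻ y, ENNReal.ofReal |f y| / edist x y ^ ((n : ℝ) - 1)

/-- `Ω` is an `(α, β)`-John domain with John center `x₀`: every `x ∈ Ω` can be joined to `x₀`
by a rectifiable curve `γ : [0, L] → Ω` parametrized by arclength (hence `1`-Lipschitz) with
`γ 0 = x`, `γ L = x₀`, `L ≤ β` and `dist (γ t, ∂Ω) ≥ (α/β) t`. -/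
def IsJohnDomainWithCenter (n : ℕ) (α β : ℝ) (Ω : Set (EuclideanSpace ℝ (Fin n)))
    (x₀ : EuclideanSpace ℝ (Fin n)) : Prop :=
  x₀ ∈ Ω ∧ ∀ x ∈ Ω, ∃ L : ℝ, 0 ≤ L ∧ L ≤ β ∧ ∃ γ : ℝ → EuclideanSpace ℝ (Fin n),
    γ 0 = x ∧ γ L = x₀ ∧ (∀ t ∈ Set.Icc 0 L, γ t ∈ Ω) ∧
    LipschitzOnWith 1 γ (Set.Icc 0 L) ∧
    ∀ t ∈ Set.Icc 0 L, α / β * t ≤ Metric.infDist (γ t) (frontier Ω)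

/-- `Ω` is an `(α, β)`-John domain. -/
def IsJohnDomain (n : ℕ) (α β : ℝ) (Ω : Set (EuclideanSpace ℝ (Fin n))) : Prop :=
  ∃ x₀, IsJohnDomainWithCenter n α β Ω x₀

lemma hContent_mono {n : ℕ} {δ : ℝ} {E F : Set (EuclideanSpace ℝ (Fin n))} (h : E ⊆ F) :
    hContent n δ E ≤ hContent n δ F := by
  refine le_iInf fun x => le_iInf fun r => le_iInf fun hc => ?_
  exact iInf_le_of_le x (iInf_le_of_le r (iInf_le_of_le (h.trans hc) le_rfl))

lemma tsum_rpow_le (a : ℕ → ℝ≥0∞) {q : ℝ} (hq : 1 ≤ q) :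
    ∑' i, a i ^ q ≤ (∑' i, a i) ^ q := by
  have hq0 : 0 < q := lt_of_lt_of_le one_pos hq
  set S := ∑' i, a i with hSdef
  rcases eq_or_ne S 0 with hS | hS
  · have h0 : ∀ i, a i = 0 := by
      intro i
      have := ENNReal.le_tsum (f := a) i
      rw [← hSdef, hS] at this
      simpa using this
    simp [h0, ENNReal.zero_rpow_of_pos hq0, hS]
  rcases eq_or_ne S ∞ with hT | hT
  · rw [hT, ENNReal.top_rpow_of_pos hq0]; exact le_top
  calc ∑' i, a i ^ q ≤ ∑' i, a i * S ^ (q - 1) := by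
        refine ENNReal.tsum_le_tsum fun i => ?_
        rcases eq_or_ne (a i) 0 with h0 | h0
        · simp [h0, ENNReal.zero_rpow_of_pos hq0]
        · have hai_top : a i ≠ ∞ := ne_top_of_le_ne_top hT (ENNReal.le_tsum i)
          calc a i ^ q = a i ^ (1 + (q - 1)) := by ring_nf
            _ = a i * a i ^ (q - 1) := by
                rw [ENNReal.rpow_add _ _ h0 hai_top, ENNReal.rpow_one]
            _ ≤ a i * S ^ (q - 1) := by
                gcongr
                · exact ENNReal.le_tsum i
    _ = S * S ^ (q - 1) := ENNReal.tsum_mul_right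
    _ = S ^ q := by
        nth_rewrite 1 [← ENNReal.rpow_one S]
        rw [← ENNReal.rpow_add _ _ hS hT]
        ring_nf

lemma vol_le_hContent {n : ℕ} (hn : 1 ≤ n) {δ : ℝ} (hδ0 : 0 < δ) (hδn : δ ≤ n)
    (E : Set (EuclideanSpace ℝ (Fin n))) :
    volume E ≤ volume (ball (0 : EuclideanSpace ℝ (Fin n)) 1) * hContent n δ E ^ ((n : ℝ) / δ) := by
  haveI : Nonempty (Fin n) := Fin.pos_iff_nonempty.1 hn
  have hnR : (0:ℝ) < n := by exact_mod_cast hn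
  set w := volume (ball (0 : EuclideanSpace ℝ (Fin n)) 1) with hw
  have hw0 : w ≠ 0 := (measure_ball_pos _ _ one_pos).ne'
  have hwt : w ≠ ∞ := measure_ball_lt_top.ne
  have key : ∀ (x : ℕ → EuclideanSpace ℝ (Fin n)) (r : ℕ → ℝ≥0),
      E ⊆ ⋃ i, ball (x i) (r i) →
      volume E ≤ w * (∑' i, (r i : ℝ≥0∞) ^ δ) ^ ((n : ℝ) / δ) := by
    intro x r hc
    have step1 : volume E ≤ ∑' i, volume (ball (x i) ((r i : ℝ))) :=
      (measure_mono hc).trans (measure_iUnion_le _)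
    have step2 : ∀ i, volume (ball (x i) ((r i : ℝ))) = (r i : ℝ≥0∞) ^ ((n:ℝ)) * w := by
      intro i
      rw [Measure.addHaar_ball _ _ (r i).coe_nonneg, finrank_euclideanSpace_fin]
      congr 1
      rw [← ENNReal.ofReal_coe_nnreal, ← Real.rpow_natCast ((r i : ℝ)) n,
        ENNReal.ofReal_rpow_of_nonneg (r i).coe_nonneg (le_of_lt hnR)]
    have step3 : ∀ i, (r i : ℝ≥0∞) ^ ((n:ℝ)) = ((r i : ℝ≥0∞) ^ δ) ^ ((n:ℝ)/δ) := by
      intro i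
      rw [← ENNReal.rpow_mul]
      congr 1
      field_simp
    calc volume E ≤ ∑' i, volume (ball (x i) ((r i : ℝ))) := step1
      _ = (∑' i, ((r i : ℝ≥0∞) ^ δ) ^ ((n:ℝ)/δ)) * w := by
          rw [← ENNReal.tsum_mul_right]
          exact tsum_congr fun i => by rw [step2 i, step3 i]
      _ ≤ (∑' i, (r i:ℝ≥0∞) ^ δ) ^ ((n:ℝ)/δ) * w := by
          gcongr
          exact tsum_rpow_le _ ((one_le_div hδ0).2 hδn)
      _ = w * (∑' i, (r i:ℝ≥0∞) ^ δ) ^ ((n:ℝ)/δ) := mul_comm _ _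
  have hq0 : (0:ℝ) ≤ (n:ℝ)/δ := div_nonneg hnR.le hδ0.le
  have aux : (volume E / w) ^ (δ/(n:ℝ)) ≤ hContent n δ E := by
    refine le_iInf fun x => le_iInf fun r => le_iInf fun hc => ?_
    have h2 : volume E / w ≤ (∑' i, (r i:ℝ≥0∞) ^ δ) ^ ((n:ℝ)/δ) :=
      ENNReal.div_le_of_le_mul (by rw [mul_comm] at *; exact key x r hc)
    calc (volume E / w) ^ (δ/(n:ℝ))
        ≤ ((∑' i, (r i:ℝ≥0∞) ^ δ) ^ ((n:ℝ)/δ)) ^ (δ/(n:ℝ)) :=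
          ENNReal.rpow_le_rpow h2 (div_nonneg hδ0.le hnR.le)
      _ = ∑' i, (r i:ℝ≥0∞) ^ δ := by
          rw [← ENNReal.rpow_mul]
          rw [show (n:ℝ)/δ * (δ/(n:ℝ)) = 1 by field_simp]
          exact ENNReal.rpow_one _
  have h3 : volume E / w ≤ hContent n δ E ^ ((n:ℝ)/δ) := by
    have := ENNReal.rpow_le_rpow aux hq0
    rwa [← ENNReal.rpow_mul, show (δ/(n:ℝ)) * ((n:ℝ)/δ) = 1 by field_simp,
      ENNReal.rpow_one] at this
  rw [mul_comm]
  exact (ENNReal.div_le_iff_le_mul (Or.inl hw0) (Or.inl hwt)).1 h3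

lemma chebyshev {n : ℕ} {δ p : ℝ} (hp : 0 < p) (f : EuclideanSpace ℝ (Fin n) → ℝ) {t : ℝ}
    (ht : 0 < t) :
    ENNReal.ofReal (t ^ p) * hContent n δ {y | t < |f y|}
      ≤ choquet n δ Set.univ (fun y => |f y| ^ p) := by
  calc ENNReal.ofReal (t ^ p) * hContent n δ {y | t < |f y|}
      = ∫⁻ _ in Ioo (0:ℝ) (t ^ p), hContent n δ {y | t < |f y|} := by
        rw [setLIntegral_const, Real.volume_Ioo, sub_zero, mul_comm]
    _ ≤ ∫⁻ s in Ioo (0:ℝ) (t ^ p),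
          hContent n δ {x ∈ Set.univ | s < (fun y => |f y| ^ p) x} := by
        refine lintegral_mono_ae ?_
        rw [ae_restrict_iff' measurableSet_Ioo]
        refine ae_of_all _ fun s hs => hContent_mono fun y hy => ⟨trivial, ?_⟩
        exact hs.2.trans (Real.rpow_lt_rpow ht.le hy hp)
    _ ≤ choquet n δ Set.univ (fun y => |f y| ^ p) := by
        unfold choquet
        exact lintegral_mono_set Ioo_subset_Ioi_self

lemma ball_lint_le_maximal {n : ℕ} {κ : ℝ} (f : EuclideanSpace ℝ (Fin n) → ℝ)
    (x : EuclideanSpace ℝ (Fin n)) {r : ℝ} (hr : 0 < r) :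
    ∫⁻ y in ball x r, ENNReal.ofReal |f y|
      ≤ ENNReal.ofReal (r ^ ((n:ℝ) - κ)) * fracMaximal n κ f x := by
  have h1 : ENNReal.ofReal (r ^ (κ - (n:ℝ))) * ∫⁻ y in ball x r, ENNReal.ofReal |f y|
      ≤ fracMaximal n κ f x := by
    unfold fracMaximal
    exact le_iSup₂ (f := fun (r : ℝ) (_ : 0 < r) =>
      ENNReal.ofReal (r ^ (κ - (n:ℝ))) * ∫⁻ y in ball x r, ENNReal.ofReal |f y|) r hr
  calc ∫⁻ y in ball x r, ENNReal.ofReal |f y|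
      = ENNReal.ofReal (r ^ ((n:ℝ) - κ)) *
          (ENNReal.ofReal (r ^ (κ - (n:ℝ))) * ∫⁻ y in ball x r, ENNReal.ofReal |f y|) := by
        rw [← mul_assoc, ← ENNReal.ofReal_mul (by positivity), ← Real.rpow_add hr]
        norm_num
    _ ≤ _ := mul_le_mul_right h1 _

lemma riesz_zero {n : ℕ} {f : EuclideanSpace ℝ (Fin n) → ℝ}
    (h : (fun y => ENNReal.ofReal |f y|) =ᵐ[volume] 0) (x : EuclideanSpace ℝ (Fin n)) :
    rieszPot n f x = 0 := by
  unfold rieszPot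
  have h2 : (fun y => ENNReal.ofReal |f y| / edist x y ^ ((n:ℝ) - 1)) =ᵐ[volume] 0 := by
    filter_upwards [h] with y hy
    simp only [Pi.zero_apply] at hy ⊢
    rw [hy, ENNReal.zero_div]
  rw [lintegral_congr_ae h2]
  simp

lemma ae_zero_of_maximal_zero {n : ℕ} {κ : ℝ} {f : EuclideanSpace ℝ (Fin n) → ℝ}
    (hf : AEMeasurable (fun y => ENNReal.ofReal |f y|) volume) (x : EuclideanSpace ℝ (Fin n))
    (h : fracMaximal n κ f x = 0) :
    (fun y => ENNReal.ofReal |f y|) =ᵐ[volume] 0 := by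
  have hball : ∀ k : ℕ, ∫⁻ y in ball x ((k:ℝ)+1), ENNReal.ofReal |f y| = 0 := by
    intro k
    have hk : (0:ℝ) < (k:ℝ)+1 := by positivity
    have h1 : ENNReal.ofReal (((k:ℝ)+1) ^ (κ - (n:ℝ))) *
        ∫⁻ y in ball x ((k:ℝ)+1), ENNReal.ofReal |f y| ≤ 0 := by
      rw [← h]
      exact le_iSup₂ (f := fun (r : ℝ) (_ : 0 < r) =>
        ENNReal.ofReal (r ^ (κ - (n:ℝ))) * ∫⁻ y in ball x r, ENNReal.ofReal |f y|) _ hk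
    have h0 : ENNReal.ofReal (((k:ℝ)+1) ^ (κ - (n:ℝ))) ≠ 0 := by
      simp only [ne_eq, ENNReal.ofReal_eq_zero, not_le]
      positivity
    have := le_antisymm h1 (zero_le)
    exact (mul_eq_zero.1 this).resolve_left h0
  have htot : ∫⁻ y, ENNReal.ofReal |f y| = 0 := by
    refine le_antisymm ?_ (zero_le)
    have hcover : (Set.univ : Set (EuclideanSpace ℝ (Fin n))) ⊆ ⋃ k : ℕ, ball x ((k:ℝ)+1) := by
      intro y _
      obtain ⟨k, hk⟩ := exists_nat_gt (dist y x)
      exact mem_iUnion.2 ⟨k, by simp only [mem_ball]; linarith⟩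
    calc ∫⁻ y, ENNReal.ofReal |f y| = ∫⁻ y in Set.univ, ENNReal.ofReal |f y| :=
          (setLIntegral_univ _).symm
      _ ≤ ∫⁻ y in ⋃ k : ℕ, ball x ((k:ℝ)+1), ENNReal.ofReal |f y| :=
          lintegral_mono_set hcover
      _ ≤ ∑' k : ℕ, ∫⁻ y in ball x ((k:ℝ)+1), ENNReal.ofReal |f y| := lintegral_iUnion_le _ _
      _ ≤ 0 := by simp [hball]
  exact (lintegral_eq_zero_iff' hf).1 htot

lemma ae_zero_of_choquet_zero {n : ℕ} (hn : 1 ≤ n) {δ p : ℝ} (hδ0 : 0 < δ) (hδn : δ ≤ n)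
    (hp : 0 < p) {f : EuclideanSpace ℝ (Fin n) → ℝ}
    (hB : choquet n δ Set.univ (fun y => |f y| ^ p) = 0) :
    (fun y => ENNReal.ofReal |f y|) =ᵐ[volume] 0 := by
  have hA : ∀ t : ℝ, 0 < t → volume {y | t < |f y|} = 0 := by
    intro t ht
    have h1 := chebyshev (n := n) (δ := δ) hp f ht
    rw [hB] at h1
    have h2 : hContent n δ {y | t < |f y|} = 0 := by
      have h0 : ENNReal.ofReal (t ^ p) ≠ 0 := by
        simp only [ne_eq, ENNReal.ofReal_eq_zero, not_le]
        positivity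
      exact (mul_eq_zero.1 (le_antisymm h1 (zero_le))).resolve_left h0
    have h3 := vol_le_hContent hn hδ0 hδn {y | t < |f y|}
    rw [h2, ENNReal.zero_rpow_of_pos (by positivity), mul_zero] at h3
    exact le_antisymm h3 (zero_le)
  have hnull : volume {y : EuclideanSpace ℝ (Fin n) | 0 < |f y|} = 0 := by
    have hsub : {y : EuclideanSpace ℝ (Fin n) | 0 < |f y|}
        ⊆ ⋃ k : ℕ, {y | 1/((k:ℝ)+1) < |f y|} := by
      intro y hy
      obtain ⟨k, hk⟩ := exists_nat_one_div_lt (show (0:ℝ) < |f y| from hy)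
      exact mem_iUnion.2 ⟨k, hk⟩
    exact measure_mono_null hsub (measure_iUnion_null fun k => hA _ (by positivity))
  rw [Filter.eventuallyEq_iff_exists_mem]
  refine ⟨{y | 0 < |f y|}ᶜ, ?_, fun y hy => ?_⟩
  · rw [mem_ae_iff, compl_compl]; exact hnull
  · simp only [mem_compl_iff, mem_setOf_eq, not_lt] at hy
    simp only [Pi.zero_apply, ENNReal.ofReal_eq_zero]
    exact hy

lemma lint_Ioi_rpow {s : ℝ} (hs : s < -1) {d : ℝ} (hd : 0 < d) :
    ∫⁻ ρ in Ioi d, ENNReal.ofReal (ρ ^ s) = ENNReal.ofReal (d ^ (s + 1) / (-(s + 1))) := by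
  rw [← ofReal_integral_eq_lintegral_ofReal (integrableOn_Ioi_rpow_of_lt hs hd)
    ((ae_restrict_iff' measurableSet_Ioi).2 (ae_of_all _ fun ρ hρ =>
      Real.rpow_nonneg (le_of_lt (hd.trans hρ)) _))]
  rw [integral_Ioi_rpow_of_lt hs hd]
  congr 1
  rw [show -(s + 1) = -1 - s by ring, show (-1 - s : ℝ) = -(1 + s) by ring]
  rw [div_eq_mul_inv, div_eq_mul_inv, inv_neg]
  ring

lemma lint_Ioc_rpow {s : ℝ} (hs : -1 < s) {r : ℝ} (hr : 0 < r) :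
    ∫⁻ ρ in Ioc 0 r, ENNReal.ofReal (ρ ^ s) = ENNReal.ofReal (r ^ (s + 1) / (s + 1)) := by
  have hint : IntegrableOn (fun ρ : ℝ => ρ ^ s) (Ioc 0 r) := by
    have h := intervalIntegral.intervalIntegrable_rpow' (a := 0) (b := r) hs
    rwa [intervalIntegrable_iff_integrableOn_Ioc_of_le hr.le] at h
  rw [← ofReal_integral_eq_lintegral_ofReal hint
    ((ae_restrict_iff' measurableSet_Ioc).2 (ae_of_all _ fun ρ hρ =>
      Real.rpow_nonneg (le_of_lt hρ.1) _))]
  congr 1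
  rw [← intervalIntegral.integral_of_le hr.le, integral_rpow (Or.inl hs)]
  rw [Real.zero_rpow (by linarith : s + 1 ≠ 0)]
  ring

lemma rexp_alpha {B' R δ p : ℝ} (hR : 0 < R) (n : ℕ) :
    R ^ ((n : ℝ)) * (B' ^ (1/p) * R ^ (-(δ/p))) = B' ^ (1/p) * (R ^ ((n:ℝ) - δ/p)) := by
  rw [← mul_assoc, mul_comm (R ^ ((n:ℝ))), mul_assoc, ← Real.rpow_add hR,
    show (n:ℝ) + -(δ/p) = (n:ℝ) - δ/p by ring]

lemma rexp_beta {B' R δ p : ℝ} (hB : 0 < B') (hR : 0 < R) (hp : 0 < p) (hδ : 0 < δ) (n : ℕ) :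
    B' ^ ((n:ℝ)/δ) * (B' ^ (1/p) * R ^ (-(δ/p))) ^ (1 - p * n / δ) =
      B' ^ (1/p) * (R ^ ((n:ℝ) - δ/p)) := by
  rw [Real.mul_rpow (by positivity) (by positivity),
      ← Real.rpow_mul hB.le, ← Real.rpow_mul hR.le,
      ← mul_assoc, ← Real.rpow_add hB,
      show (n:ℝ)/δ + 1/p * (1 - p * n / δ) = 1/p by field_simp; ring,
      show (-(δ/p)) * (1 - p * n / δ) = (n:ℝ) - δ/p by field_simp; ring]

lemma ball_lint_le_choquet {n : ℕ} (hn : 1 ≤ n) {δ p : ℝ} (hδ0 : 0 < δ) (hδn : δ ≤ n)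
    (hp1 : δ / n < p) {f : EuclideanSpace ℝ (Fin n) → ℝ}
    (hf : AEMeasurable f volume)
    (hB0 : choquet n δ Set.univ (fun y => |f y| ^ p) ≠ 0)
    (hBt : choquet n δ Set.univ (fun y => |f y| ^ p) ≠ ∞)
    (x : EuclideanSpace ℝ (Fin n)) {R : ℝ} (hR : 0 < R) :
    ∫⁻ y in ball x R, ENNReal.ofReal |f y| ≤
      ENNReal.ofReal ((volume (ball (0 : EuclideanSpace ℝ (Fin n)) 1)).toReal *
          (1 + (p * n / δ - 1)⁻¹) *
          ((choquet n δ Set.univ (fun y => |f y| ^ p)).toReal ^ (1/p) *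
            R ^ ((n:ℝ) - δ/p))) := by
  haveI : Nonempty (Fin n) := Fin.pos_iff_nonempty.1 hn
  have hnR : (0:ℝ) < n := by exact_mod_cast hn
  have hp0 : 0 < p := lt_trans (div_pos hδ0 hnR) hp1
  set B := choquet n δ Set.univ (fun y => |f y| ^ p) with hBdef
  set B' := B.toReal with hB'def
  have hB' : 0 < B' := ENNReal.toReal_pos hB0 hBt
  set w := volume (ball (0 : EuclideanSpace ℝ (Fin n)) 1) with hwdef
  have hw0 : w ≠ 0 := (measure_ball_pos _ _ one_pos).ne'
  have hwt : w ≠ ∞ := measure_ball_lt_top.ne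
  set W := w.toReal with hWdef
  have hW : 0 < W := ENNReal.toReal_pos hw0 hwt
  have hwW : w = ENNReal.ofReal W := (ENNReal.ofReal_toReal hwt).symm
  set q := p * (n:ℝ) / δ with hqdef
  have hq1 : 1 < q := by
    rw [hqdef]
    rw [lt_div_iff₀ hδ0, one_mul]
    calc δ = δ / n * n := by field_simp
      _ < p * n := by gcongr
  set t₀ := B' ^ (1/p) * R ^ (-(δ/p)) with ht₀def
  have ht₀ : 0 < t₀ := by positivity
  set μR := volume.restrict (ball x R) with hμRdef
  have hlayer : ∫⁻ y in ball x R, ENNReal.ofReal |f y|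
      = ∫⁻ t in Ioi (0:ℝ), μR {y | t < |f y|} := by
    exact lintegral_eq_lintegral_meas_lt μR (ae_of_all _ fun y => abs_nonneg (f y))
      (measurable_abs.comp_aemeasurable hf).restrict
  have hvolball : volume (ball x R) = ENNReal.ofReal (W * R ^ ((n:ℝ))) := by
    rw [Measure.addHaar_ball _ _ hR.le, finrank_euclideanSpace_fin, ← hwdef, hwW,
      ← ENNReal.ofReal_mul (by positivity)]
    rw [show R ^ n * W = W * R ^ ((n:ℝ)) by rw [← Real.rpow_natCast R n]; ring]
  have piece1 : ∫⁻ t in Ioc (0:ℝ) t₀, μR {y | t < |f y|}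
      ≤ ENNReal.ofReal (W * R ^ ((n:ℝ))) * ENNReal.ofReal t₀ := by
    calc ∫⁻ t in Ioc (0:ℝ) t₀, μR {y | t < |f y|}
        ≤ ∫⁻ _ in Ioc (0:ℝ) t₀, volume (ball x R) := by
          refine lintegral_mono fun t => ?_
          rw [hμRdef, Measure.restrict_apply' measurableSet_ball]
          exact measure_mono inter_subset_right
      _ = volume (ball x R) * ENNReal.ofReal t₀ := by
          rw [setLIntegral_const, Real.volume_Ioc, sub_zero]
      _ = ENNReal.ofReal (W * R ^ ((n:ℝ))) * ENNReal.ofReal t₀ := by rw [hvolball]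
  have piece2 : ∫⁻ t in Ioi t₀, μR {y | t < |f y|}
      ≤ ENNReal.ofReal (W * B' ^ ((n:ℝ)/δ)) * ENNReal.ofReal (t₀ ^ (1 - q) / (q - 1)) := by
    have hmono : ∀ t ∈ Ioi t₀, μR {y | t < |f y|}
        ≤ ENNReal.ofReal (W * B' ^ ((n:ℝ)/δ)) * ENNReal.ofReal (t ^ (-q)) := by
      intro t ht
      have htpos : 0 < t := ht₀.trans ht
      have hc1 : μR {y | t < |f y|} ≤ volume {y | t < |f y|} := by
        rw [hμRdef, Measure.restrict_apply' measurableSet_ball]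
        exact measure_mono inter_subset_left
      have hc3 : hContent n δ {y | t < |f y|} ≤ B / ENNReal.ofReal (t ^ p) := by
        rw [ENNReal.le_div_iff_mul_le (Or.inl (by simp [ENNReal.ofReal_eq_zero, not_le]; positivity))
          (Or.inl ENNReal.ofReal_ne_top), mul_comm]
        exact chebyshev hp0 f htpos
      have hc4 : (B / ENNReal.ofReal (t ^ p)) ^ ((n:ℝ)/δ)
          = ENNReal.ofReal (B' ^ ((n:ℝ)/δ)) * ENNReal.ofReal (t ^ (-q)) := by
        rw [ENNReal.div_rpow_of_nonneg _ _ (by positivity)]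
        rw [show B = ENNReal.ofReal B' from (ENNReal.ofReal_toReal hBt).symm]
        rw [ENNReal.ofReal_rpow_of_pos hB', ENNReal.ofReal_rpow_of_pos (by positivity)]
        rw [← Real.rpow_mul htpos.le, show p * ((n:ℝ)/δ) = q by rw [hqdef]; ring]
        rw [div_eq_mul_inv, ← ENNReal.ofReal_inv_of_pos (by positivity : (0:ℝ) < t ^ q),
          ← Real.rpow_neg htpos.le]
      calc μR {y | t < |f y|} ≤ volume {y | t < |f y|} := hc1
        _ ≤ w * hContent n δ {y | t < |f y|} ^ ((n:ℝ)/δ) := by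
            rw [hwdef]; exact vol_le_hContent hn hδ0 hδn _
        _ ≤ w * (B / ENNReal.ofReal (t ^ p)) ^ ((n:ℝ)/δ) :=
            mul_le_mul_right (ENNReal.rpow_le_rpow hc3 (by positivity)) w
        _ = ENNReal.ofReal (W * B' ^ ((n:ℝ)/δ)) * ENNReal.ofReal (t ^ (-q)) := by
            rw [hc4, hwW, ← mul_assoc, ← ENNReal.ofReal_mul hW.le]
    calc ∫⁻ t in Ioi t₀, μR {y | t < |f y|}
        ≤ ∫⁻ t in Ioi t₀, ENNReal.ofReal (W * B' ^ ((n:ℝ)/δ)) * ENNReal.ofReal (t ^ (-q)) :=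
          lintegral_mono_ae ((ae_restrict_iff' measurableSet_Ioi).2 (ae_of_all _ hmono))
      _ = ENNReal.ofReal (W * B' ^ ((n:ℝ)/δ)) * ∫⁻ t in Ioi t₀, ENNReal.ofReal (t ^ (-q)) :=
          lintegral_const_mul' _ _ ENNReal.ofReal_ne_top
      _ = ENNReal.ofReal (W * B' ^ ((n:ℝ)/δ)) * ENNReal.ofReal (t₀ ^ (1 - q) / (q - 1)) := by
          rw [lint_Ioi_rpow (by linarith : -q < -1) ht₀,
            show -q + 1 = 1 - q by ring]
          congr 2
          rw [show (-(1 - q) : ℝ) = q - 1 by ring]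
  have hdisj : Disjoint (Ioc (0:ℝ) t₀) (Ioi t₀) :=
    disjoint_left.2 fun a ha hb => absurd hb (not_lt.2 ha.2)
  calc ∫⁻ y in ball x R, ENNReal.ofReal |f y|
      = ∫⁻ t in Ioi (0:ℝ), μR {y | t < |f y|} := hlayer
    _ = (∫⁻ t in Ioc (0:ℝ) t₀, μR {y | t < |f y|}) + ∫⁻ t in Ioi t₀, μR {y | t < |f y|} := by
        rw [← Ioc_union_Ioi_eq_Ioi ht₀.le, lintegral_union measurableSet_Ioi hdisj]
    _ ≤ ENNReal.ofReal (W * R ^ ((n:ℝ))) * ENNReal.ofReal t₀ +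
        ENNReal.ofReal (W * B' ^ ((n:ℝ)/δ)) * ENNReal.ofReal (t₀ ^ (1 - q) / (q - 1)) :=
        add_le_add piece1 piece2
    _ = ENNReal.ofReal (W * R ^ ((n:ℝ)) * t₀ +
          W * B' ^ ((n:ℝ)/δ) * (t₀ ^ (1 - q) / (q - 1))) := by
        rw [← ENNReal.ofReal_mul (by positivity), ← ENNReal.ofReal_mul (by positivity),
          ← ENNReal.ofReal_add (by positivity)
            (by
              have h1 : (0:ℝ) < q - 1 := by linarith
              positivity)]
    _ ≤ ENNReal.ofReal (W * (1 + (q - 1)⁻¹) *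
          (B' ^ (1/p) * R ^ ((n:ℝ) - δ/p))) := by
        refine ENNReal.ofReal_le_ofReal (le_of_eq ?_)
        have hA : R ^ ((n:ℝ)) * t₀ = B' ^ (1/p) * (R ^ ((n:ℝ) - δ/p)) := by
          rw [ht₀def]; exact rexp_alpha hR n
        have hBeq : B' ^ ((n:ℝ)/δ) * t₀ ^ (1 - q) = B' ^ (1/p) * (R ^ ((n:ℝ) - δ/p)) := by
          rw [ht₀def, hqdef]; exact rexp_beta hB' hR hp0 hδ0 n
        have hq0 : q - 1 ≠ 0 := by linarith
        calc W * R ^ ((n:ℝ)) * t₀ + W * B' ^ ((n:ℝ)/δ) * (t₀ ^ (1 - q) / (q - 1))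
            = W * (R ^ ((n:ℝ)) * t₀) + W * (B' ^ ((n:ℝ)/δ) * t₀ ^ (1 - q)) * (q - 1)⁻¹ := by
              ring
          _ = W * (1 + (q - 1)⁻¹) * (B' ^ (1/p) * R ^ ((n:ℝ) - δ/p)) := by
              rw [hA, hBeq]; ring

lemma riesz_layer {n : ℕ} (hn : 2 ≤ n) {f : EuclideanSpace ℝ (Fin n) → ℝ}
    (hf : AEMeasurable f volume) (x : EuclideanSpace ℝ (Fin n)) :
    rieszPot n f x ≤ ENNReal.ofReal ((n:ℝ) - 1) *
      ∫⁻ ρ in Ioi (0:ℝ), ENNReal.ofReal (ρ ^ (-(n:ℝ))) *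
        ∫⁻ y in ball x ρ, ENNReal.ofReal |f y| := by
  haveI : Nonempty (Fin n) := Fin.pos_iff_nonempty.1 (by omega)
  haveI : NullSingletonClass (volume : Measure (EuclideanSpace ℝ (Fin n))) := by infer_instance
  have hn1 : (1:ℝ) < n := by exact_mod_cast hn
  have hg : AEMeasurable (fun y => ENNReal.ofReal |f y|) volume :=
    ENNReal.measurable_ofReal.comp_aemeasurable (measurable_abs.comp_aemeasurable hf)
  set g₀ : EuclideanSpace ℝ (Fin n) → ℝ≥0∞ := hg.mk _ with hg₀def
  have hg₀ : Measurable g₀ := hg.measurable_mk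
  have heq : (fun y => ENNReal.ofReal |f y|) =ᵐ[volume] g₀ := hg.ae_eq_mk
  set F : ℝ × EuclideanSpace ℝ (Fin n) → ℝ≥0∞ := fun z =>
    ({w : ℝ × EuclideanSpace ℝ (Fin n) | dist w.2 x < w.1}).indicator
      (fun w => ENNReal.ofReal (w.1 ^ (-(n:ℝ))) * g₀ w.2) z with hFdef
  have hFmeas : Measurable F := by
    apply Measurable.indicator
    · exact (ENNReal.measurable_ofReal.comp (by fun_prop : Measurable
        fun w : ℝ × EuclideanSpace ℝ (Fin n) => w.1 ^ (-(n:ℝ)))).mul (hg₀.comp measurable_snd)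
    · exact (isOpen_lt (continuous_snd.dist continuous_const) continuous_fst).measurableSet
  -- pointwise identity for y ≠ x
  have hpt : ∀ y : EuclideanSpace ℝ (Fin n), y ≠ x →
      g₀ y / edist x y ^ ((n:ℝ) - 1) =
        ENNReal.ofReal ((n:ℝ) - 1) * ∫⁻ ρ in Ioi (0:ℝ), F (ρ, y) := by
    intro y hy
    set d := dist y x with hddef
    have hd : 0 < d := dist_pos.2 hy
    have hsec : (fun ρ => F (ρ, y)) =
        fun ρ => (Ioi d).indicator (fun ρ => ENNReal.ofReal (ρ ^ (-(n:ℝ))) * g₀ y) ρ := by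
      funext ρ
      simp only [hFdef, Set.indicator, mem_setOf_eq, mem_Ioi, ← hddef]
    have hint : ∫⁻ ρ in Ioi (0:ℝ), F (ρ, y) =
        (∫⁻ ρ in Ioi d, ENNReal.ofReal (ρ ^ (-(n:ℝ)))) * g₀ y := by
      rw [hsec, lintegral_indicator measurableSet_Ioi, Measure.restrict_restrict measurableSet_Ioi,
        Ioi_inter_Ioi, max_eq_left hd.le,
        lintegral_mul_const _ (by fun_prop : Measurable
          fun ρ : ℝ => ENNReal.ofReal (ρ ^ (-(n:ℝ))))]
    rw [hint, lint_Ioi_rpow (by linarith : -(n:ℝ) < -1) hd]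
    rw [edist_dist, dist_comm, ← hddef, ENNReal.ofReal_rpow_of_pos hd]
    rw [ENNReal.div_eq_inv_mul, ← ENNReal.ofReal_inv_of_pos (by positivity),
      ← Real.rpow_neg hd.le, ← mul_assoc, ← ENNReal.ofReal_mul (by linarith)]
    rw [show ((n:ℝ) - 1) * (d ^ (-(n:ℝ) + 1) / (-(-(n:ℝ) + 1))) = d ^ (-((n:ℝ) - 1)) by
      rw [show (-(-(n:ℝ) + 1)) = (n:ℝ) - 1 by ring, mul_comm,
        div_mul_cancel₀ _ (by linarith : (n:ℝ) - 1 ≠ 0)]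
      congr 1
      ring]
  -- a.e. bound
  have hae : ∀ᵐ y ∂(volume : Measure (EuclideanSpace ℝ (Fin n))),
      ENNReal.ofReal |f y| / edist x y ^ ((n:ℝ) - 1) =
        ENNReal.ofReal ((n:ℝ) - 1) * ∫⁻ ρ in Ioi (0:ℝ), F (ρ, y) := by
    have hx : ∀ᵐ y ∂(volume : Measure (EuclideanSpace ℝ (Fin n))), y ≠ x := by
      rw [ae_iff]
      have : {a : EuclideanSpace ℝ (Fin n) | ¬a ≠ x} = {x} := by ext y; simp
      rw [this]
      exact measure_singleton x
    filter_upwards [heq, hx] with y h1 h2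
    rw [h1, hpt y h2]
  have hswap : ∫⁻ ρ in Ioi (0:ℝ), ∫⁻ y, F (ρ, y) ∂volume ∂volume =
      ∫⁻ y, ∫⁻ ρ in Ioi (0:ℝ), F (ρ, y) ∂volume ∂volume :=
    lintegral_lintegral_swap (μ := volume.restrict (Ioi (0:ℝ))) (ν := volume)
      (f := fun ρ y => F (ρ, y)) hFmeas.aemeasurable
  have hinner : ∀ ρ : ℝ, ∫⁻ y, F (ρ, y) ∂volume =
      ENNReal.ofReal (ρ ^ (-(n:ℝ))) * ∫⁻ y in ball x ρ, g₀ y := by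
    intro ρ
    have : (fun y => F (ρ, y)) = fun y =>
        (ball x ρ).indicator (fun y => ENNReal.ofReal (ρ ^ (-(n:ℝ))) * g₀ y) y := by
      funext y
      simp only [hFdef, Set.indicator, mem_setOf_eq, mem_ball]
    rw [this, lintegral_indicator measurableSet_ball,
      lintegral_const_mul' _ _ ENNReal.ofReal_ne_top]
  have hball : ∀ ρ : ℝ, ∫⁻ y in ball x ρ, g₀ y = ∫⁻ y in ball x ρ, ENNReal.ofReal |f y| :=
    fun ρ => lintegral_congr_ae (ae_restrict_of_ae heq.symm)
  refine le_of_eq ?_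
  calc rieszPot n f x
      = ∫⁻ y, ENNReal.ofReal ((n:ℝ) - 1) * ∫⁻ ρ in Ioi (0:ℝ), F (ρ, y) ∂volume ∂volume := by
        unfold rieszPot
        exact lintegral_congr_ae hae
    _ = ENNReal.ofReal ((n:ℝ) - 1) * ∫⁻ y, ∫⁻ ρ in Ioi (0:ℝ), F (ρ, y) ∂volume ∂volume :=
        lintegral_const_mul' _ _ ENNReal.ofReal_ne_top
    _ = ENNReal.ofReal ((n:ℝ) - 1) * ∫⁻ ρ in Ioi (0:ℝ), ∫⁻ y, F (ρ, y) ∂volume ∂volume := by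
        rw [← hswap]
    _ = ENNReal.ofReal ((n:ℝ) - 1) * ∫⁻ ρ in Ioi (0:ℝ),
          ENNReal.ofReal (ρ ^ (-(n:ℝ))) * ∫⁻ y in ball x ρ, ENNReal.ofReal |f y| := by
        congr 1
        refine lintegral_congr fun ρ => ?_
        rw [hinner ρ, hball ρ]

lemma rexp_opt {B' M' p δ κ : ℝ} (hB : 0 < B') (hM : 0 < M') (hp : 0 < p)
    (hd : 0 < δ - κ * p) :
    M' * ((B' ^ (1/p) * M'⁻¹) ^ (p/(δ-κ*p))) ^ (1 - κ)
        = M' ^ ((δ-p)/(δ-κ*p)) * B' ^ ((1-κ)/(δ-κ*p)) ∧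
    B' ^ (1/p) * ((B' ^ (1/p) * M'⁻¹) ^ (p/(δ-κ*p))) ^ (1 - δ/p)
        = M' ^ ((δ-p)/(δ-κ*p)) * B' ^ ((1-κ)/(δ-κ*p)) := by
  have hu : 0 < B' ^ (1/p) := by positivity
  have hd0 : δ - κ * p ≠ 0 := ne_of_gt hd
  have hp0 : p ≠ 0 := ne_of_gt hp
  have key : ∀ e : ℝ, ((B' ^ (1/p) * M'⁻¹) ^ (p/(δ-κ*p))) ^ e
      = B' ^ (1/p*(p/(δ-κ*p)*e)) * M' ^ (-(p/(δ-κ*p)*e)) := by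
    intro e
    rw [← Real.rpow_mul (by positivity), Real.mul_rpow hu.le (by positivity),
      ← Real.rpow_mul hB.le, Real.inv_rpow hM.le, ← Real.rpow_neg hM.le]
  constructor
  · rw [key (1-κ),
      show (1:ℝ)/p*(p/(δ-κ*p)*(1-κ)) = (1-κ)/(δ-κ*p) by field_simp,
      show -(p/(δ-κ*p)*(1-κ)) = (δ-p)/(δ-κ*p) - 1 by rw [div_sub_one hd0]; field_simp; ring]
    calc M' * (B' ^ ((1-κ)/(δ-κ*p)) * M' ^ ((δ-p)/(δ-κ*p) - 1))
        = B' ^ ((1-κ)/(δ-κ*p)) * (M' ^ (1:ℝ) * M' ^ ((δ-p)/(δ-κ*p) - 1)) := by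
          rw [Real.rpow_one]; ring
      _ = M' ^ ((δ-p)/(δ-κ*p)) * B' ^ ((1-κ)/(δ-κ*p)) := by
          rw [← Real.rpow_add hM, show (1:ℝ) + ((δ-p)/(δ-κ*p) - 1) = (δ-p)/(δ-κ*p) by ring]
          ring
  · rw [key (1 - δ/p),
      show -(p/(δ-κ*p)*(1-δ/p)) = (δ-p)/(δ-κ*p) by field_simp; ring]
    calc B' ^ (1/p) * (B' ^ (1/p*(p/(δ-κ*p)*(1-δ/p))) * M' ^ ((δ-p)/(δ-κ*p)))
        = B' ^ (1/p + 1/p*(p/(δ-κ*p)*(1-δ/p))) * M' ^ ((δ-p)/(δ-κ*p)) := by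
          rw [Real.rpow_add hB]; ring
      _ = M' ^ ((δ-p)/(δ-κ*p)) * B' ^ ((1-κ)/(δ-κ*p)) := by
          rw [show (1:ℝ)/p + 1/p*(p/(δ-κ*p)*(1-δ/p)) = (1-κ)/(δ-κ*p) by
              have h' : δ - p * κ ≠ 0 := by rwa [mul_comm]
              field_simp; ring]
          ring

/-- Hedberg-type pointwise estimate with a Choquet integral. For `0 ≤ κ < 1`,
`0 < δ ≤ n`, `δ/n < p < δ` there is `c = c(n, δ, κ, p)` such that for all `x ∈ ℝⁿ` and all
`f ∈ L¹_loc(ℝⁿ)`,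
`∫_{ℝⁿ} |f(y)|/|x-y|^{n-1} dy ≤ c (M_κ f x)^{(δ-p)/(δ-κp)} (∫_{ℝⁿ} |f|^p dH^δ_∞)^{(1-κ)/(δ-κp)}`. -/
theorem choquet_hedberg (n : ℕ) (hn : 2 ≤ n) (κ δ p : ℝ)
    (hκ0 : 0 ≤ κ) (hκ1 : κ < 1) (hδ0 : 0 < δ) (hδn : δ ≤ (n : ℝ))
    (hp1 : δ / n < p) (hp2 : p < δ) :
    ∃ c : ℝ≥0, 0 < c ∧
      ∀ f : EuclideanSpace ℝ (Fin n) → ℝ, LocallyIntegrable f volume →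
        ∀ x : EuclideanSpace ℝ (Fin n),
          rieszPot n f x
            ≤ c * fracMaximal n κ f x ^ ((δ - p) / (δ - κ * p)) *
                (choquet n δ Set.univ fun y => |f y| ^ p) ^ ((1 - κ) / (δ - κ * p)) := by
  have hn1 : 1 ≤ n := by omega
  haveI : Nonempty (Fin n) := Fin.pos_iff_nonempty.1 hn1
  have hnR : (0:ℝ) < n := by exact_mod_cast hn1
  have hn1R : (1:ℝ) < n := by exact_mod_cast hn
  have hp0 : 0 < p := lt_trans (div_pos hδ0 hnR) hp1
  have hκp : 0 < δ - κ * p := by nlinarith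
  have ha0 : 0 < (δ - p) / (δ - κ * p) := div_pos (by linarith) hκp
  have hb0 : 0 < (1 - κ) / (δ - κ * p) := div_pos (by linarith) hκp
  have hq1 : (1:ℝ) < p * n / δ := by
    rw [lt_div_iff₀ hδ0, one_mul]
    calc δ = δ / n * n := by field_simp
      _ < p * n := by gcongr
  have hdp1 : (1:ℝ) < δ / p := (one_lt_div hp0).2 hp2
  set W := (volume (ball (0 : EuclideanSpace ℝ (Fin n)) 1)).toReal with hWdef
  have hW : 0 < W := ENNReal.toReal_pos (measure_ball_pos _ _ one_pos).ne'
    measure_ball_lt_top.ne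
  set K2 := W * (1 + (p * (n:ℝ) / δ - 1)⁻¹) with hK2def
  have hK2 : 0 < K2 := by
    have : (0:ℝ) < p * (n:ℝ) / δ - 1 := by linarith
    positivity
  set C := ((n:ℝ) - 1) * ((1 - κ)⁻¹ + K2 * (δ/p - 1)⁻¹) with hCdef
  have hC : 0 < C := by
    have h1 : (0:ℝ) < 1 - κ := by linarith
    have h2 : (0:ℝ) < δ/p - 1 := by linarith
    have h3 : (0:ℝ) < (n:ℝ) - 1 := by linarith
    positivity
  refine ⟨C.toNNReal, Real.toNNReal_pos.2 hC, fun f hf x => ?_⟩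
  have haef : AEMeasurable f volume := hf.aestronglyMeasurable.aemeasurable
  have hgmeas : AEMeasurable (fun y => ENNReal.ofReal |f y|) volume :=
    ENNReal.measurable_ofReal.comp_aemeasurable (measurable_abs.comp_aemeasurable haef)
  set M := fracMaximal n κ f x with hMdef
  set B := choquet n δ Set.univ (fun y => |f y| ^ p) with hBdef
  by_cases hM0 : M = 0
  · rw [riesz_zero (ae_zero_of_maximal_zero hgmeas x hM0) x]
    exact zero_le
  by_cases hB0 : B = 0
  · rw [riesz_zero (ae_zero_of_choquet_zero hn1 hδ0 hδn hp0 hB0) x]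
    exact zero_le
  by_cases hMt : M = ∞
  · have : (C.toNNReal : ℝ≥0∞) * M ^ ((δ - p) / (δ - κ * p)) *
        B ^ ((1 - κ) / (δ - κ * p)) = ∞ := by
      rw [hMt, ENNReal.top_rpow_of_pos ha0]
      rw [ENNReal.mul_top (by simp [Real.toNNReal_eq_zero, not_le, hC]),
        ENNReal.top_mul]
      simp only [ne_eq, ENNReal.rpow_eq_zero_iff]
      push_neg
      exact ⟨fun h => absurd h hB0, fun _ => hb0.le⟩
    rw [this]
    exact le_top
  by_cases hBt : B = ∞
  · have : (C.toNNReal : ℝ≥0∞) * M ^ ((δ - p) / (δ - κ * p)) *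
        B ^ ((1 - κ) / (δ - κ * p)) = ∞ := by
      rw [hBt, ENNReal.top_rpow_of_pos hb0, ENNReal.mul_top]
      simp only [ne_eq, mul_eq_zero, not_or]
      refine ⟨by simp [Real.toNNReal_eq_zero, not_le, hC], ?_⟩
      simp only [ne_eq, ENNReal.rpow_eq_zero_iff]
      push_neg
      exact ⟨fun h => absurd h hM0, fun _ => ha0.le⟩
    rw [this]
    exact le_top
  -- main case
  set M' := M.toReal with hM'def
  have hM' : 0 < M' := ENNReal.toReal_pos hM0 hMt
  set B' := B.toReal with hB'def
  have hB' : 0 < B' := ENNReal.toReal_pos hB0 hBt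
  set r := (B' ^ (1/p) * M'⁻¹) ^ (p/(δ-κ*p)) with hrdef
  have hr0 : 0 < r := by positivity
  obtain ⟨hI, hII⟩ := rexp_opt hB' hM' hp0 hκp
  rw [← hrdef] at hI hII
  set Φ : ℝ → ℝ≥0∞ := fun ρ => ∫⁻ y in ball x ρ, ENNReal.ofReal |f y| with hΦdef
  have hT1 : ∫⁻ ρ in Ioc (0:ℝ) r, ENNReal.ofReal (ρ ^ (-(n:ℝ))) * Φ ρ
      ≤ ENNReal.ofReal (r ^ (1-κ) / (1-κ)) * M := by
    calc ∫⁻ ρ in Ioc (0:ℝ) r, ENNReal.ofReal (ρ ^ (-(n:ℝ))) * Φ ρ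
        ≤ ∫⁻ ρ in Ioc (0:ℝ) r, ENNReal.ofReal (ρ ^ (-κ)) * M := by
          refine lintegral_mono_ae ((ae_restrict_iff' measurableSet_Ioc).2
            (ae_of_all _ fun ρ hρ => ?_))
          have hρ0 : 0 < ρ := hρ.1
          calc ENNReal.ofReal (ρ ^ (-(n:ℝ))) * Φ ρ
              ≤ ENNReal.ofReal (ρ ^ (-(n:ℝ))) * (ENNReal.ofReal (ρ ^ ((n:ℝ) - κ)) * M) :=
                mul_le_mul_right (ball_lint_le_maximal f x hρ0) _
            _ = ENNReal.ofReal (ρ ^ (-κ)) * M := by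
                rw [← mul_assoc, ← ENNReal.ofReal_mul (by positivity), ← Real.rpow_add hρ0,
                  show -(n:ℝ) + ((n:ℝ) - κ) = -κ by ring]
      _ = ENNReal.ofReal (r ^ (1-κ) / (1-κ)) * M := by
          rw [lintegral_mul_const _ (by fun_prop : Measurable
              fun ρ : ℝ => ENNReal.ofReal (ρ ^ (-κ))),
            lint_Ioc_rpow (by linarith : (-1:ℝ) < -κ) hr0, show -κ + 1 = 1 - κ by ring]
  have hT2 : ∫⁻ ρ in Ioi r, ENNReal.ofReal (ρ ^ (-(n:ℝ))) * Φ ρ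
      ≤ ENNReal.ofReal (K2 * B' ^ (1/p)) * ENNReal.ofReal (r ^ (1 - δ/p) / (δ/p - 1)) := by
    calc ∫⁻ ρ in Ioi r, ENNReal.ofReal (ρ ^ (-(n:ℝ))) * Φ ρ
        ≤ ∫⁻ ρ in Ioi r, ENNReal.ofReal (K2 * B' ^ (1/p)) * ENNReal.ofReal (ρ ^ (-(δ/p))) := by
          refine lintegral_mono_ae ((ae_restrict_iff' measurableSet_Ioi).2
            (ae_of_all _ fun ρ hρ => ?_))
          have hρ0 : 0 < ρ := hr0.trans hρ
          calc ENNReal.ofReal (ρ ^ (-(n:ℝ))) * Φ ρ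
              ≤ ENNReal.ofReal (ρ ^ (-(n:ℝ))) *
                  ENNReal.ofReal (W * (1 + (p * (n:ℝ) / δ - 1)⁻¹) *
                    (B' ^ (1/p) * ρ ^ ((n:ℝ) - δ/p))) :=
                mul_le_mul_right (ball_lint_le_choquet hn1 hδ0 hδn hp1 haef hB0 hBt x hρ0) _
            _ = ENNReal.ofReal (K2 * B' ^ (1/p)) * ENNReal.ofReal (ρ ^ (-(δ/p))) := by
                rw [← ENNReal.ofReal_mul (by positivity), ← hK2def,
                  show ρ ^ (-(n:ℝ)) * (K2 * (B' ^ (1/p) * ρ ^ ((n:ℝ) - δ/p)))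
                    = K2 * B' ^ (1/p) * (ρ ^ (-(n:ℝ)) * ρ ^ ((n:ℝ) - δ/p)) by ring,
                  ← Real.rpow_add hρ0, show -(n:ℝ) + ((n:ℝ) - δ/p) = -(δ/p) by ring,
                  ENNReal.ofReal_mul (by positivity)]
      _ = ENNReal.ofReal (K2 * B' ^ (1/p)) * ENNReal.ofReal (r ^ (1 - δ/p) / (δ/p - 1)) := by
          rw [lintegral_const_mul' _ _ ENNReal.ofReal_ne_top,
            lint_Ioi_rpow (by linarith : -(δ/p) < -1) hr0,
            show -(δ/p) + 1 = 1 - δ/p by ring, show -(1 - δ/p) = δ/p - 1 by ring]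
  have hsplit : ∫⁻ ρ in Ioi (0:ℝ), ENNReal.ofReal (ρ ^ (-(n:ℝ))) * Φ ρ
      = (∫⁻ ρ in Ioc (0:ℝ) r, ENNReal.ofReal (ρ ^ (-(n:ℝ))) * Φ ρ)
        + ∫⁻ ρ in Ioi r, ENNReal.ofReal (ρ ^ (-(n:ℝ))) * Φ ρ := by
    rw [← Ioc_union_Ioi_eq_Ioi hr0.le, lintegral_union measurableSet_Ioi
      (disjoint_left.2 fun a ha hb => absurd hb (not_lt.2 ha.2))]
  have hMre : M = ENNReal.ofReal M' := (ENNReal.ofReal_toReal hMt).symm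
  calc rieszPot n f x
      ≤ ENNReal.ofReal ((n:ℝ) - 1) *
          ∫⁻ ρ in Ioi (0:ℝ), ENNReal.ofReal (ρ ^ (-(n:ℝ))) * Φ ρ := riesz_layer hn haef x
    _ ≤ ENNReal.ofReal ((n:ℝ) - 1) *
          (ENNReal.ofReal (r ^ (1-κ) / (1-κ)) * M +
            ENNReal.ofReal (K2 * B' ^ (1/p)) * ENNReal.ofReal (r ^ (1 - δ/p) / (δ/p - 1))) := by
        rw [hsplit]
        exact mul_le_mul_right (add_le_add hT1 hT2) _
    _ = ENNReal.ofReal (((n:ℝ) - 1) * (r ^ (1-κ) / (1-κ) * M' +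
          K2 * B' ^ (1/p) * (r ^ (1 - δ/p) / (δ/p - 1)))) := by
        have hone : (0:ℝ) < 1 - κ := by linarith
        have h2 : (0:ℝ) < δ/p - 1 := by linarith
        rw [hMre, ← ENNReal.ofReal_mul (by positivity), ← ENNReal.ofReal_mul (by positivity),
          ← ENNReal.ofReal_add (by positivity) (by positivity),
          ← ENNReal.ofReal_mul (by linarith)]
    _ = ENNReal.ofReal (C * (M' ^ ((δ-p)/(δ-κ*p)) * B' ^ ((1-κ)/(δ-κ*p)))) := by
        congr 1
        have e1 : r ^ (1-κ) / (1-κ) * M' = M' * r ^ (1-κ) * (1-κ)⁻¹ := by ring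
        have e2 : K2 * B' ^ (1/p) * (r ^ (1 - δ/p) / (δ/p - 1))
            = K2 * (B' ^ (1/p) * r ^ (1 - δ/p)) * (δ/p - 1)⁻¹ := by ring
        rw [e1, e2, hI, hII, hCdef]
        ring
    _ = (C.toNNReal : ℝ≥0∞) * M ^ ((δ - p) / (δ - κ * p)) * B ^ ((1 - κ) / (δ - κ * p)) := by
        rw [hMre, show B = ENNReal.ofReal B' from (ENNReal.ofReal_toReal hBt).symm,
          ENNReal.ofReal_rpow_of_pos hM', ENNReal.ofReal_rpow_of_pos hB',
          ENNReal.ofReal_mul hC.le,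
          ENNReal.ofReal_mul (Real.rpow_nonneg ENNReal.toReal_nonneg _), ← mul_assoc]
        rfl
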